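/- Let $n \geq 3$ and $2 \leq m \leq n-1$. Let $b_k$, $m+1 \leq k \leq 2m$, be homogeneous polynomials of degree $k$ in $z_1,\ldots,z_n$, and let $f(t_0,\ldots,t_n) = t_0^{2m} + \sum_{k=m+1}^{2m} t_0^{2m-k} b_k(t_1,\ldots,t_n)$. Then for the point $y = 0 \in \mathbb{C}^n$ (i.e., $[1:0:\cdots:0] \in \mathbb{P}^n$), a direction $[z] \in \mathbb{P}^{n-1}$ gives an ECO line through $y$ with respect to $\{f = 0\}$ if and only if $b_{m+1}(z) = b_{m+2}(z) = \cdots = b_{2m}(z) = 0$; i.e., the variety of ECO directions at $y$ is the common zero locus of $b_{m+1},\ldots,b_{2m}$, a subvariety of $\mathbb{P}^{n-1}$ cut out by equations of degrees $m+1, m+2, \ldots, 2m$. -/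

import Mathlib

open Polynomial Finset

lemma eco_aux {n k : ℕ} {p : MvPolynomial (Fin n) ℂ} (hp : p.IsHomogeneous k) (z : Fin n → ℂ) :
    MvPolynomial.aeval (fun j => Polynomial.C (z j) * Polynomial.X) p
      = Polynomial.C (MvPolynomial.eval z p) * Polynomial.X ^ k := by
  rw [MvPolynomial.aeval_def, MvPolynomial.eval₂_eq', MvPolynomial.eval_eq', map_sum,
    Finset.sum_mul]
  refine Finset.sum_congr rfl fun d hd => ?_
  have hdeg : ∑ i, d i = k := by
    have := hp (MvPolynomial.mem_support_iff.mp hd)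
    simpa [Finsupp.weight_apply, Finsupp.sum_fintype] using this
  simp only [mul_pow, Finset.prod_mul_distrib, Finset.prod_pow_eq_pow_sum, hdeg,
    Polynomial.algebraMap_eq, map_mul, map_prod, map_pow]
  ring

/-- Let `f = t_0^{2m} + ∑_{k=m+1}^{2m} t_0^{2m-k} b_k(t_1,…,t_n)` with `b_k` homogeneous
of degree `k`. For the point `y = 0` (i.e. `[1:0:⋯:0] ∈ ℙ^n`), a direction `z` gives an
ECO line with respect to `{f = 0}` — i.e. `λ ↦ f(1, λz)` is an ECO polynomial, the
square of a polynomial of degree at most `m` — if and only if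
`b_{m+1}(z) = ⋯ = b_{2m}(z) = 0`: the variety of ECO directions at `y` is the common
zero locus of `b_{m+1},…,b_{2m}`, cut out by equations of degrees `m+1,…,2m`. -/
theorem stmt19 (n m : ℕ) (hn : 3 ≤ n) (hm : 2 ≤ m) (hmn : m ≤ n - 1)
    (b : ℕ → MvPolynomial (Fin n) ℂ)
    (hb : ∀ k ∈ Finset.Icc (m + 1) (2 * m), (b k).IsHomogeneous k) :
    let f : MvPolynomial (Fin (n + 1)) ℂ :=
      MvPolynomial.X 0 ^ (2 * m) + ∑ k ∈ Finset.Icc (m + 1) (2 * m),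
        MvPolynomial.X 0 ^ (2 * m - k) * MvPolynomial.rename Fin.succ (b k)
    ∀ z : Fin n → ℂ,
      ((∃ h : Polynomial ℂ, h.natDegree ≤ m ∧
          MvPolynomial.aeval (Fin.cons (1 : Polynomial ℂ)
            (fun j => Polynomial.C (z j) * Polynomial.X)) f = h ^ 2) ↔
        ∀ k ∈ Finset.Icc (m + 1) (2 * m), MvPolynomial.eval z (b k) = 0) := by
  intro f z
  have hP : MvPolynomial.aeval (Fin.cons (1 : Polynomial ℂ)
        (fun j => Polynomial.C (z j) * Polynomial.X)) f
      = 1 + ∑ k ∈ Finset.Icc (m + 1) (2 * m),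
          Polynomial.C (MvPolynomial.eval z (b k)) * Polynomial.X ^ k := by
    simp only [f, map_add, map_sum, map_mul, map_pow, MvPolynomial.aeval_X, Fin.cons_zero,
      one_pow, one_mul, MvPolynomial.aeval_rename]
    congr 1
    refine Finset.sum_congr rfl fun k hk => ?_
    have : (Fin.cons (1 : Polynomial ℂ) (fun j => Polynomial.C (z j) * Polynomial.X))
        ∘ Fin.succ = fun j => Polynomial.C (z j) * Polynomial.X := by
      funext j; simp
    rw [this, eco_aux (hb k hk) z]
  rw [hP]
  set Q : Polynomial ℂ := 1 + ∑ k ∈ Finset.Icc (m + 1) (2 * m),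
      Polynomial.C (MvPolynomial.eval z (b k)) * Polynomial.X ^ k with hQ
  have hQcoeff : ∀ j, Q.coeff j = (if j = 0 then 1 else 0) +
      if j ∈ Finset.Icc (m + 1) (2 * m) then MvPolynomial.eval z (b j) else 0 := by
    intro j
    simp only [hQ, Polynomial.coeff_add, Polynomial.finset_sum_coeff, Polynomial.coeff_C_mul,
      Polynomial.coeff_X_pow, Polynomial.coeff_one, mul_ite, mul_one, mul_zero]
    congr 1
    rw [Finset.sum_ite_eq (Finset.Icc (m + 1) (2 * m)) j (fun k => MvPolynomial.eval z (b k))]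
  constructor
  · rintro ⟨h, hdeg, heq⟩
    have hsq : Q = h * h := by rw [heq, sq]
    have h0 : h.coeff 0 * h.coeff 0 = 1 := by
      have := congrArg (fun p => Polynomial.coeff p 0) hsq
      simp only [Polynomial.mul_coeff_zero] at this
      rw [← this, hQcoeff 0]
      simp [Nat.lt_irrefl, Finset.mem_Icc]
    have h0ne : h.coeff 0 ≠ 0 := by
      intro hc; rw [hc, mul_zero] at h0; exact one_ne_zero h0.symm
    -- all middle coefficients of h vanish
    have hmid : ∀ j, 1 ≤ j → j ≤ m → h.coeff j = 0 := by
      intro j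
      induction j using Nat.strong_induction_on with
      | _ j ih =>
        intro hj1 hjm
        have hQj : Q.coeff j = 0 := by
          rw [hQcoeff j]
          have : j ∉ Finset.Icc (m + 1) (2 * m) := by simp [Finset.mem_Icc]; omega
          simp [this]; omega
        have hsum : (h * h).coeff j =
            h.coeff 0 * h.coeff j + h.coeff j * h.coeff 0 := by
          rw [Polynomial.coeff_mul]
          have hm1 : ((0 : ℕ), j) ∈ Finset.HasAntidiagonal.antidiagonal j := by
            simp [Finset.HasAntidiagonal.mem_antidiagonal]
          have hm2 : ((j : ℕ), 0) ∈ (Finset.HasAntidiagonal.antidiagonal j).erase (0, j) := by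
            refine Finset.mem_erase.mpr ⟨?_, by simp [Finset.HasAntidiagonal.mem_antidiagonal]⟩
            intro hcon
            exact (by omega : j ≠ 0) (congrArg Prod.fst hcon)
          rw [← Finset.add_sum_erase _ _ hm1, ← Finset.add_sum_erase _ _ hm2]
          have hrest : ∑ x ∈ ((Finset.HasAntidiagonal.antidiagonal j).erase (0, j)).erase (j, 0),
              h.coeff x.1 * h.coeff x.2 = 0 := by
            refine Finset.sum_eq_zero fun x hx => ?_
            obtain ⟨hne2, hne1, hmem⟩ :
                x ≠ (j, 0) ∧ x ≠ (0, j) ∧ x ∈ Finset.HasAntidiagonal.antidiagonal j := by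
              rcases Finset.mem_erase.mp hx with ⟨a, hb⟩
              rcases Finset.mem_erase.mp hb with ⟨c, d⟩
              exact ⟨a, c, d⟩
            rw [Finset.HasAntidiagonal.mem_antidiagonal] at hmem
            have hx1' : x.1 ≠ 0 := fun hc => hne1 (Prod.ext hc (by omega))
            have hx2' : x.2 ≠ 0 := fun hc => hne2 (Prod.ext (by omega) hc)
            have : h.coeff x.1 = 0 := ih x.1 (by omega) (by omega) (by omega)
            rw [this, zero_mul]
          rw [hrest, add_zero]
        rw [← hsq, hQj] at hsum
        have : h.coeff 0 * h.coeff j = 0 := by linear_combination -hsum / 2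
        rcases mul_eq_zero.mp this with hc | hc
        · exact absurd hc h0ne
        · exact hc
    intro k hk
    rw [Finset.mem_Icc] at hk
    have hQk : Q.coeff k = MvPolynomial.eval z (b k) := by
      rw [hQcoeff k]
      simp [Finset.mem_Icc, hk.1, hk.2, show k ≠ 0 by omega]
    have : (h * h).coeff k = 0 := by
      rw [Polynomial.coeff_mul]
      refine Finset.sum_eq_zero fun x hx => ?_
      rw [Finset.HasAntidiagonal.mem_antidiagonal] at hx
      rcases Nat.eq_zero_or_pos x.1 with hx1 | hx1
      · have : h.coeff x.2 = 0 := by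
          apply Polynomial.coeff_eq_zero_of_natDegree_lt; omega
        rw [this, mul_zero]
      · rcases le_or_gt x.1 m with hx1m | hx1m
        · rw [hmid x.1 hx1 hx1m, zero_mul]
        · have : h.coeff x.1 = 0 := by
            apply Polynomial.coeff_eq_zero_of_natDegree_lt; omega
          rw [this, zero_mul]
    rw [← hsq, hQk] at this
    exact this
  · intro hz
    refine ⟨1, by simp, ?_⟩
    rw [hQ]
    have : ∑ k ∈ Finset.Icc (m + 1) (2 * m),
        Polynomial.C (MvPolynomial.eval z (b k)) * Polynomial.X ^ k = 0 := by
      refine Finset.sum_eq_zero fun k hk => ?_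
      rw [hz k hk]; simp
    rw [this]; simp
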